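/- (Single-letter form of Theorem 1, tightness of Shannon's inner bound.) Let D ⊆ ℝ² be the set of points (R_1,R_2) with 0 ≤ R_1, 0 ≤ R_2 that are componentwise upper-bounded by some point of the convex hull of {(0,0), (C_{1,1}, C_{2,1}), (C_{1,0}, 0), (0, C_{2,0})}. Then: (a) for every joint probability distribution P on X_1 × X_2, the pair (I_P(X_1;Y_2|X_2), I_P(X_2;Y_1|X_1)) lies in D (Shannon's outer-bound region is contained in D); and (b) every point of D is componentwise upper-bounded by a convex combination of pairs (I_Q(X_1;Y_2|X_2), I_Q(X_2;Y_1|X_1)) where Q ranges over product distributions Q_1 × Q_2 on X_1 × X_2 (so D is contained in Shannon's inner-bound region). -/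

import Mathlib

open Real BigOperators Finset

/-- Entropy of a finite probability vector, with the convention `0 * log 0 = 0`
(automatic since `Real.log 0 = 0`). -/
noncomputable def ent {n : ℕ} (p : Fin n → ℝ) : ℝ := -∑ y, p y * Real.log (p y)

/-- `Q` is a probability distribution on `Fin n`. -/
def IsProbDist {n : ℕ} (Q : Fin n → ℝ) : Prop := (∀ x, 0 ≤ Q x) ∧ ∑ x, Q x = 1

/-- `P` is a joint probability distribution. -/
def IsJointProbDist {m n : ℕ} (P : Fin m → Fin n → ℝ) : Prop :=
  (∀ x1 x2, 0 ≤ P x1 x2) ∧ ∑ x1, ∑ x2, P x1 x2 = 1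

/-- First marginal `P_1`. -/
noncomputable def marg1 {m n : ℕ} (P : Fin m → Fin n → ℝ) (x1 : Fin m) : ℝ := ∑ x2, P x1 x2

/-- Second marginal `P_2`. -/
noncomputable def marg2 {m n : ℕ} (P : Fin m → Fin n → ℝ) (x2 : Fin n) : ℝ := ∑ x1, P x1 x2

/-- Conditional mutual information `I_P(X₁;Y₂|X₂)`; terms with
`P x1 x2 * W2 x1 x2 y2 = 0` vanish, and summands with `marg2 P x2 = 0` vanish
since then `P x1 x2 = 0`. -/
noncomputable def condMI1 {m n t : ℕ} (P : Fin m → Fin n → ℝ)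
    (W2 : Fin m → Fin n → Fin t → ℝ) : ℝ :=
  ∑ x2, ∑ x1, ∑ y2, P x1 x2 * W2 x1 x2 y2 *
    Real.log (W2 x1 x2 y2 / ((∑ x1', P x1' x2 * W2 x1' x2 y2) / marg2 P x2))

/-- Conditional mutual information `I_P(X₂;Y₁|X₁)`. -/
noncomputable def condMI2 {m n t : ℕ} (P : Fin m → Fin n → ℝ)
    (W1 : Fin m → Fin n → Fin t → ℝ) : ℝ :=
  ∑ x1, ∑ x2, ∑ y1, P x1 x2 * W1 x1 x2 y1 *
    Real.log (W1 x1 x2 y1 / ((∑ x2', P x1 x2' * W1 x1 x2' y1) / marg1 P x1))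

/-- Structural assumptions of a generalized push-to-talk two-way channel with
input alphabets `Fin (r1+3)`, `Fin (r2+3)` and output alphabets `Fin (s1+2)`,
`Fin (s2+2)`: both marginal channels are transition matrices; the row of
input `0` of each user is uniform; for each state, the nonzero-input rows are
permutations of the row of input `1` and have constant column sums
(weak symmetry). -/
def GenPTT {r1 r2 s1 s2 : ℕ} (W1 : Fin (r1 + 3) → Fin (r2 + 3) → Fin (s1 + 2) → ℝ)
    (W2 : Fin (r1 + 3) → Fin (r2 + 3) → Fin (s2 + 2) → ℝ) : Prop :=
  (∀ x1 x2 y1, 0 ≤ W1 x1 x2 y1) ∧ (∀ x1 x2 y2, 0 ≤ W2 x1 x2 y2) ∧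
  (∀ x1 x2, ∑ y1, W1 x1 x2 y1 = 1) ∧ (∀ x1 x2, ∑ y2, W2 x1 x2 y2 = 1) ∧
  (∀ x2 y2, W2 0 x2 y2 = 1 / ((s2 : ℝ) + 2)) ∧
  (∀ x2, ∀ x1 : Fin (r1 + 3), x1 ≠ 0 →
    ∃ σ : Equiv.Perm (Fin (s2 + 2)), ∀ y2, W2 x1 x2 y2 = W2 1 x2 (σ y2)) ∧
  (∀ x2, ∀ y2 y2' : Fin (s2 + 2),
    ∑ x1 ∈ Finset.univ.filter (fun x1 => x1 ≠ (0 : Fin (r1 + 3))), W2 x1 x2 y2 =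
    ∑ x1 ∈ Finset.univ.filter (fun x1 => x1 ≠ (0 : Fin (r1 + 3))), W2 x1 x2 y2') ∧
  (∀ x1 y1, W1 x1 0 y1 = 1 / ((s1 : ℝ) + 2)) ∧
  (∀ x1, ∀ x2 : Fin (r2 + 3), x2 ≠ 0 →
    ∃ σ : Equiv.Perm (Fin (s1 + 2)), ∀ y1, W1 x1 x2 y1 = W1 x1 1 (σ y1)) ∧
  (∀ x1, ∀ y1 y1' : Fin (s1 + 2),
    ∑ x2 ∈ Finset.univ.filter (fun x2 => x2 ≠ (0 : Fin (r2 + 3))), W1 x1 x2 y1 =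
    ∑ x2 ∈ Finset.univ.filter (fun x2 => x2 ≠ (0 : Fin (r2 + 3))), W1 x1 x2 y1')

/-- `C_{1,x₂} = log s₂ − H(row of input 1 of Q_{1,x₂})`. -/
noncomputable def C1 {r1 r2 s2 : ℕ} (W2 : Fin (r1 + 3) → Fin (r2 + 3) → Fin (s2 + 2) → ℝ)
    (x2 : Fin (r2 + 3)) : ℝ := Real.log ((s2 : ℝ) + 2) - ent (fun y2 => W2 1 x2 y2)

/-- `C_{2,x₁} = log s₁ − H(row of input 1 of Q_{2,x₁})`. -/
noncomputable def C2 {r1 r2 s1 : ℕ} (W1 : Fin (r1 + 3) → Fin (r2 + 3) → Fin (s1 + 2) → ℝ)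
    (x1 : Fin (r1 + 3)) : ℝ := Real.log ((s1 : ℝ) + 2) - ent (fun y1 => W1 x1 1 y1)

/-- The channel symmetry property: `C_{1,x₂} = C_{1,1}` for all `x₂ ≠ 0` and
`C_{2,x₁} = C_{2,1}` for all `x₁ ≠ 0`. -/
def SymProp {r1 r2 s1 s2 : ℕ} (W1 : Fin (r1 + 3) → Fin (r2 + 3) → Fin (s1 + 2) → ℝ)
    (W2 : Fin (r1 + 3) → Fin (r2 + 3) → Fin (s2 + 2) → ℝ) : Prop :=
  (∀ x2 : Fin (r2 + 3), x2 ≠ 0 → C1 W2 x2 = C1 W2 1) ∧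
  (∀ x1 : Fin (r1 + 3), x1 ≠ 0 → C2 W1 x1 = C2 W1 1)

lemma gibbs {ι : Type*} [Fintype ι] (a b : ι → ℝ) (ha : ∀ i, 0 ≤ a i) (hb : ∀ i, 0 ≤ b i)
    (hab : ∀ i, b i ≠ 0 → a i ≠ 0) (hs : ∑ i, a i ≤ ∑ i, b i) :
    0 ≤ ∑ i, b i * Real.log (b i / a i) := by
  have key : ∀ i, b i * Real.log (a i / b i) ≤ a i - b i := by
    intro i
    rcases eq_or_lt_of_le (hb i) with h0 | h0
    · simp [← h0, ha i]
    · have ha' : 0 < a i := lt_of_le_of_ne (ha i) (Ne.symm (hab i h0.ne'))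
      have hlog := Real.log_le_sub_one_of_pos (div_pos ha' h0)
      have := mul_le_mul_of_nonneg_left hlog (le_of_lt h0)
      calc b i * Real.log (a i / b i) ≤ b i * (a i / b i - 1) := this
        _ = a i - b i := by field_simp
  have h2 : ∑ i, b i * Real.log (a i / b i) ≤ 0 := by
    calc ∑ i, b i * Real.log (a i / b i) ≤ ∑ i, (a i - b i) := Finset.sum_le_sum (fun i _ => key i)
      _ = ∑ i, a i - ∑ i, b i := Finset.sum_sub_distrib _ _
      _ ≤ 0 := by linarith
  have h3 : ∑ i, b i * Real.log (b i / a i) = -∑ i, b i * Real.log (a i / b i) := by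
    rw [← Finset.sum_neg_distrib]
    refine Finset.sum_congr rfl fun i _ => ?_
    rw [show b i / a i = (a i / b i)⁻¹ by rw [inv_div], Real.log_inv]
    ring
  rw [h3]; linarith

lemma sum_split_zero {n : ℕ} (f : Fin (n + 3) → ℝ) :
    ∑ x, f x = f 0 + ∑ x ∈ Finset.univ.filter (fun x => x ≠ (0 : Fin (n + 3))), f x := by
  rw [Finset.filter_ne' Finset.univ 0]
  exact (Finset.add_sum_erase Finset.univ f (Finset.mem_univ 0)).symm

lemma cardNZ {n : ℕ} :
    (Finset.univ.filter (fun x => x ≠ (0 : Fin (n + 3)))).card = n + 2 := by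
  rw [Finset.filter_ne' Finset.univ 0, Finset.card_erase_of_mem (Finset.mem_univ 0)]
  simp

/-- column sums of the nonzero-input part equal `(a+2)/(c+2)`. -/
lemma colsum {a b c : ℕ} (W : Fin (a + 3) → Fin (b + 3) → Fin (c + 2) → ℝ)
    (hrow : ∀ x1 x2, ∑ y, W x1 x2 y = 1)
    (hcol : ∀ x2, ∀ y y' : Fin (c + 2),
      ∑ x1 ∈ Finset.univ.filter (fun x1 => x1 ≠ (0 : Fin (a + 3))), W x1 x2 y =
      ∑ x1 ∈ Finset.univ.filter (fun x1 => x1 ≠ (0 : Fin (a + 3))), W x1 x2 y')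
    (x2 : Fin (b + 3)) (y : Fin (c + 2)) :
    ∑ x1 ∈ Finset.univ.filter (fun x1 => x1 ≠ (0 : Fin (a + 3))), W x1 x2 y
      = ((a : ℝ) + 2) / ((c : ℝ) + 2) := by
  have h1 : ∑ y' : Fin (c + 2), (∑ x1 ∈ Finset.univ.filter (fun x1 => x1 ≠ (0 : Fin (a + 3))), W x1 x2 y')
      = ((c : ℝ) + 2) * ∑ x1 ∈ Finset.univ.filter (fun x1 => x1 ≠ (0 : Fin (a + 3))), W x1 x2 y := by
    rw [Finset.sum_congr rfl (fun y' _ => hcol x2 y' y), Finset.sum_const]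
    simp [mul_comm]
  have h2 : ∑ y' : Fin (c + 2), (∑ x1 ∈ Finset.univ.filter (fun x1 => x1 ≠ (0 : Fin (a + 3))), W x1 x2 y')
      = (a : ℝ) + 2 := by
    rw [Finset.sum_comm]
    rw [Finset.sum_congr rfl (fun x1 _ => hrow x1 x2), Finset.sum_const, cardNZ]
    push_cast; ring
  have hc : ((c : ℝ) + 2) ≠ 0 := by positivity
  field_simp
  linarith [h1, h2]

lemma condMI1_nonneg {a b c : ℕ} (P : Fin (a + 3) → Fin (b + 3) → ℝ)
    (W : Fin (a + 3) → Fin (b + 3) → Fin (c + 2) → ℝ)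
    (hP : ∀ x1 x2, 0 ≤ P x1 x2) (hWpos : ∀ x1 x2 y, 0 ≤ W x1 x2 y)
    (hrow : ∀ x1 x2, ∑ y, W x1 x2 y = 1) :
    0 ≤ condMI1 P W := by
  unfold condMI1
  apply Finset.sum_nonneg
  intro x2 _
  set m := marg2 P x2 with hm
  set avg := fun y => ∑ x1', P x1' x2 * W x1' x2 y with havg
  by_cases hm0 : m = 0
  · have hP0 : ∀ x1, P x1 x2 = 0 := by
      intro x1
      have := (Finset.sum_eq_zero_iff_of_nonneg (fun x1 _ => hP x1 x2)).mp hm0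
      exact this x1 (Finset.mem_univ x1)
    apply le_of_eq
    symm
    apply Finset.sum_eq_zero; intro x1 _
    apply Finset.sum_eq_zero; intro y _
    simp [hP0 x1]
  · have hmpos : 0 < m := lt_of_le_of_ne (Finset.sum_nonneg (fun x1 _ => hP x1 x2)) (Ne.symm hm0)
    set B := fun i : Fin (a + 3) × Fin (c + 2) => P i.1 x2 * W i.1 x2 i.2 with hB
    set A := fun i : Fin (a + 3) × Fin (c + 2) => P i.1 x2 * (avg i.2 / m) with hA
    have havgsum : ∑ y, avg y = m := by
      rw [havg, Finset.sum_comm]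
      calc ∑ x1', ∑ y, P x1' x2 * W x1' x2 y = ∑ x1', P x1' x2 * ∑ y, W x1' x2 y := by
            refine Finset.sum_congr rfl fun x1' _ => ?_; rw [Finset.mul_sum]
        _ = m := by rw [hm, marg2]; refine Finset.sum_congr rfl fun x1' _ => by rw [hrow, mul_one]
    have heq : ∑ x1, ∑ y, P x1 x2 * W x1 x2 y * Real.log (W x1 x2 y / (avg y / m))
        = ∑ i : Fin (a + 3) × Fin (c + 2), B i * Real.log (B i / A i) := by
      rw [← Finset.sum_product']
      refine Finset.sum_congr rfl fun i _ => ?_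
      by_cases hp : P i.1 x2 = 0
      · simp [hB, hA, hp]
      · have : B i / A i = W i.1 x2 i.2 / (avg i.2 / m) := mul_div_mul_left _ _ hp
        rw [hB, hA]; simp only; rw [this]
    rw [heq]
    apply gibbs
    · intro i
      exact mul_nonneg (hP _ _) (div_nonneg (Finset.sum_nonneg fun x1' _ =>
        mul_nonneg (hP _ _) (hWpos _ _ _)) hmpos.le)
    · intro i; exact mul_nonneg (hP _ _) (hWpos _ _ _)
    · intro i hBi
      have hp : P i.1 x2 ≠ 0 := left_ne_zero_of_mul hBi
      have hw : W i.1 x2 i.2 ≠ 0 := right_ne_zero_of_mul hBi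
      have hppos : 0 < P i.1 x2 := lt_of_le_of_ne (hP _ _) (Ne.symm hp)
      have hwpos : 0 < W i.1 x2 i.2 := lt_of_le_of_ne (hWpos _ _ _) (Ne.symm hw)
      have havgpos : 0 < avg i.2 := by
        apply lt_of_lt_of_le (mul_pos hppos hwpos)
        exact Finset.single_le_sum (f := fun x1' => P x1' x2 * W x1' x2 i.2)
          (fun x1' _ => mul_nonneg (hP _ _) (hWpos _ _ _)) (Finset.mem_univ i.1)
      exact ne_of_gt (mul_pos hppos (div_pos havgpos hmpos))
    · apply le_of_eq
      have hAsum : ∑ i : Fin (a + 3) × Fin (c + 2), A i = m := by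
        rw [Fintype.sum_prod_type]
        calc ∑ x1, ∑ y, P x1 x2 * (avg y / m) = ∑ x1, P x1 x2 * ((∑ y, avg y) / m) := by
              refine Finset.sum_congr rfl fun x1 _ => ?_
              simp only [← mul_div_assoc]
              rw [← Finset.sum_div, ← Finset.mul_sum, mul_div_assoc]
          _ = ∑ x1, P x1 x2 := by
              refine Finset.sum_congr rfl fun x1 _ => ?_
              rw [havgsum, div_self hm0, mul_one]
          _ = m := rfl
      have hBsum : ∑ i : Fin (a + 3) × Fin (c + 2), B i = m := by
        rw [Fintype.sum_prod_type]
        calc ∑ x1, ∑ y, P x1 x2 * W x1 x2 y = ∑ x1, P x1 x2 * ∑ y, W x1 x2 y := by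
              refine Finset.sum_congr rfl fun x1 _ => ?_; rw [Finset.mul_sum]
          _ = m := by rw [hm, marg2]; refine Finset.sum_congr rfl fun x1 _ => by rw [hrow, mul_one]
      rw [hAsum, hBsum]

lemma condMI1_le {a b c : ℕ} (P : Fin (a + 3) → Fin (b + 3) → ℝ)
    (W : Fin (a + 3) → Fin (b + 3) → Fin (c + 2) → ℝ)
    (hP : ∀ x1 x2, 0 ≤ P x1 x2) (hWpos : ∀ x1 x2 y, 0 ≤ W x1 x2 y)
    (hrow : ∀ x1 x2, ∑ y, W x1 x2 y = 1)
    (hunif : ∀ x2 y, W 0 x2 y = 1 / ((c : ℝ) + 2))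
    (hperm : ∀ x2, ∀ x1 : Fin (a + 3), x1 ≠ 0 →
      ∃ σ : Equiv.Perm (Fin (c + 2)), ∀ y, W x1 x2 y = W 1 x2 (σ y)) :
    condMI1 P W ≤ ∑ x2, (marg2 P x2 - P 0 x2) *
      (Real.log ((c : ℝ) + 2) - ent (fun y => W 1 x2 y)) := by
  unfold condMI1
  apply Finset.sum_le_sum
  intro x2 _
  set m := marg2 P x2 with hm
  set avg := fun y => ∑ x1', P x1' x2 * W x1' x2 y with havg
  set S : ℝ := (c : ℝ) + 2 with hS
  have hSpos : (0 : ℝ) < S := by rw [hS]; positivity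
  set L : ℝ := Real.log S with hL
  set E : ℝ := ent (fun y => W 1 x2 y) with hE
  by_cases hm0 : m = 0
  · have hP0 : ∀ x1, P x1 x2 = 0 := by
      intro x1
      exact (Finset.sum_eq_zero_iff_of_nonneg (fun x1 _ => hP x1 x2)).mp hm0 x1 (Finset.mem_univ x1)
    have h1 : ∑ x1, ∑ y, P x1 x2 * W x1 x2 y * Real.log (W x1 x2 y / (avg y / m)) = 0 := by
      apply Finset.sum_eq_zero; intro x1 _
      apply Finset.sum_eq_zero; intro y _
      simp [hP0 x1]
    rw [h1, hm0, hP0 0]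
    simp
  · have hmpos : 0 < m := lt_of_le_of_ne (Finset.sum_nonneg (fun x1 _ => hP x1 x2)) (Ne.symm hm0)
    have havgnn : ∀ y, 0 ≤ avg y :=
      fun y => Finset.sum_nonneg fun x1' _ => mul_nonneg (hP _ _) (hWpos _ _ _)
    have havgsum : ∑ y, avg y = m := by
      rw [havg, Finset.sum_comm]
      calc ∑ x1', ∑ y, P x1' x2 * W x1' x2 y = ∑ x1', P x1' x2 * ∑ y, W x1' x2 y := by
            refine Finset.sum_congr rfl fun x1' _ => ?_; rw [Finset.mul_sum]
        _ = m := by rw [hm, marg2]; refine Finset.sum_congr rfl fun x1' _ => by rw [hrow, mul_one]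
    -- termwise split of the log
    have hsplit : ∀ x1 y, P x1 x2 * W x1 x2 y * Real.log (W x1 x2 y / (avg y / m))
        = P x1 x2 * (W x1 x2 y * Real.log (W x1 x2 y))
          - P x1 x2 * W x1 x2 y * Real.log (avg y / m) := by
      intro x1 y
      by_cases hpw : P x1 x2 * W x1 x2 y = 0
      · rcases mul_eq_zero.mp hpw with h | h <;> simp [h]
      · have hp : P x1 x2 ≠ 0 := left_ne_zero_of_mul hpw
        have hw : W x1 x2 y ≠ 0 := right_ne_zero_of_mul hpw
        have hppos : 0 < P x1 x2 := lt_of_le_of_ne (hP _ _) (Ne.symm hp)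
        have hwpos : 0 < W x1 x2 y := lt_of_le_of_ne (hWpos _ _ _) (Ne.symm hw)
        have havgpos : 0 < avg y := by
          apply lt_of_lt_of_le (mul_pos hppos hwpos)
          exact Finset.single_le_sum (f := fun x1' => P x1' x2 * W x1' x2 y)
            (fun x1' _ => mul_nonneg (hP _ _) (hWpos _ _ _)) (Finset.mem_univ x1)
        rw [Real.log_div hw (ne_of_gt (div_pos havgpos hmpos))]
        ring
    have hT : ∑ x1, ∑ y, P x1 x2 * W x1 x2 y * Real.log (W x1 x2 y / (avg y / m))
        = (∑ x1, P x1 x2 * (∑ y, W x1 x2 y * Real.log (W x1 x2 y)))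
          - ∑ y, avg y * Real.log (avg y / m) := by
      calc ∑ x1, ∑ y, P x1 x2 * W x1 x2 y * Real.log (W x1 x2 y / (avg y / m))
          = ∑ x1, ∑ y, (P x1 x2 * (W x1 x2 y * Real.log (W x1 x2 y))
              - P x1 x2 * W x1 x2 y * Real.log (avg y / m)) :=
            Finset.sum_congr rfl fun x1 _ => Finset.sum_congr rfl fun y _ => hsplit x1 y
        _ = (∑ x1, ∑ y, P x1 x2 * (W x1 x2 y * Real.log (W x1 x2 y)))
              - ∑ x1, ∑ y, P x1 x2 * W x1 x2 y * Real.log (avg y / m) := by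
            rw [← Finset.sum_sub_distrib]
            exact Finset.sum_congr rfl fun x1 _ => Finset.sum_sub_distrib _ _
        _ = _ := by
            congr 1
            · exact Finset.sum_congr rfl fun x1 _ => (Finset.mul_sum _ _ _).symm
            · rw [Finset.sum_comm]
              refine Finset.sum_congr rfl fun y _ => ?_
              rw [← Finset.sum_mul]
    have hSne : S ≠ 0 := ne_of_gt hSpos
    have hrow0 : ∑ y, W 0 x2 y * Real.log (W 0 x2 y) = -L := by
      rw [Finset.sum_congr rfl fun y (_ : y ∈ Finset.univ) => by rw [hunif x2 y]]
      rw [Finset.sum_const, card_univ, Fintype.card_fin, nsmul_eq_mul, hL]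
      rw [one_div, Real.log_inv]
      have : ((c + 2 : ℕ) : ℝ) = S := by rw [hS]; push_cast; ring
      rw [this]
      field_simp
    have hrowne : ∀ x1 : Fin (a + 3), x1 ≠ 0 →
        ∑ y, W x1 x2 y * Real.log (W x1 x2 y) = -E := by
      intro x1 hx1
      obtain ⟨σ, hσ⟩ := hperm x2 x1 hx1
      calc ∑ y, W x1 x2 y * Real.log (W x1 x2 y)
          = ∑ y, W 1 x2 (σ y) * Real.log (W 1 x2 (σ y)) :=
            Finset.sum_congr rfl fun y _ => by rw [hσ]
        _ = ∑ y, W 1 x2 y * Real.log (W 1 x2 y) :=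
            Equiv.sum_comp σ (fun y => W 1 x2 y * Real.log (W 1 x2 y))
        _ = -E := by rw [hE, ent]; ring
    have hPfil : ∑ x1 ∈ Finset.univ.filter (fun x1 => x1 ≠ (0 : Fin (a + 3))), P x1 x2
        = m - P 0 x2 := by
      have := sum_split_zero (fun x1 => P x1 x2)
      rw [hm, marg2]; linarith [this]
    have hfirst : ∑ x1, P x1 x2 * (∑ y, W x1 x2 y * Real.log (W x1 x2 y))
        = P 0 x2 * (-L) + (m - P 0 x2) * (-E) := by
      rw [sum_split_zero (fun x1 => P x1 x2 * (∑ y, W x1 x2 y * Real.log (W x1 x2 y)))]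
      rw [hrow0]
      congr 1
      have hcg : ∑ x1 ∈ Finset.univ.filter (fun x1 => x1 ≠ (0 : Fin (a + 3))),
          P x1 x2 * (∑ y, W x1 x2 y * Real.log (W x1 x2 y))
          = ∑ x1 ∈ Finset.univ.filter (fun x1 => x1 ≠ (0 : Fin (a + 3))), P x1 x2 * (-E) := by
        refine Finset.sum_congr rfl fun x1 hx1 => ?_
        rw [hrowne x1 (Finset.mem_filter.mp hx1).2]
      rw [hcg, ← Finset.sum_mul, hPfil]
    have hC : -(∑ y, avg y * Real.log (avg y / m)) ≤ m * L := by
      have hgs : ∑ _y : Fin (c + 2), m / S = ∑ y, avg y := by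
        rw [Finset.sum_const, card_univ, Fintype.card_fin, nsmul_eq_mul, havgsum]
        have : ((c + 2 : ℕ) : ℝ) = S := by rw [hS]; push_cast; ring
        rw [this]; field_simp
      have hg := gibbs (fun _ : Fin (c + 2) => m / S) avg
        (fun _ => (div_pos hmpos hSpos).le) havgnn
        (fun y _ => ne_of_gt (div_pos hmpos hSpos)) (le_of_eq hgs)
      have hterm : ∀ y, avg y * Real.log (avg y / (m / S))
          = avg y * Real.log (avg y / m) + avg y * L := by
        intro y
        by_cases h0 : avg y = 0
        · simp [h0]
        · rw [div_div_eq_mul_div, Real.log_div (mul_ne_zero h0 hSne) hm0,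
            Real.log_mul h0 hSne, Real.log_div h0 hm0, hL]
          ring
      have hsum2 : ∑ y, avg y * Real.log (avg y / (m / S))
          = (∑ y, avg y * Real.log (avg y / m)) + m * L := by
        rw [Finset.sum_congr rfl fun y _ => hterm y, Finset.sum_add_distrib,
          ← Finset.sum_mul, havgsum]
      rw [hsum2] at hg
      linarith
    rw [hT, hfirst]
    have hring : (m - P 0 x2) * (L - E)
        = P 0 x2 * (-L) + (m - P 0 x2) * (-E) + m * L := by ring
    rw [hring]
    linarith

noncomputable def deltaD (n : ℕ) : Fin (n + 3) → ℝ := fun x => if x = 0 then 1 else 0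
noncomputable def unifD (n : ℕ) : Fin (n + 3) → ℝ :=
  fun x => if x = 0 then 0 else ((n : ℝ) + 2)⁻¹

lemma delta_weighted {n : ℕ} (f : Fin (n + 3) → ℝ) : ∑ x, deltaD n x * f x = f 0 := by
  rw [Finset.sum_congr rfl (fun x (_ : x ∈ Finset.univ) => by
    rw [show deltaD n x * f x = if x = 0 then f x else 0 by unfold deltaD; split <;> simp])]
  simp

lemma unif_weighted {n : ℕ} (f : Fin (n + 3) → ℝ) (K : ℝ)
    (h : ∀ x : Fin (n + 3), x ≠ 0 → f x = K) : ∑ x, unifD n x * f x = K := by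
  rw [sum_split_zero (fun x => unifD n x * f x)]
  have h0 : unifD n 0 * f 0 = 0 := by simp [unifD]
  have h1 : ∑ x ∈ Finset.univ.filter (fun x => x ≠ (0 : Fin (n + 3))), unifD n x * f x
      = ∑ x ∈ Finset.univ.filter (fun x => x ≠ (0 : Fin (n + 3))), ((n : ℝ) + 2)⁻¹ * K := by
    refine Finset.sum_congr rfl fun x hx => ?_
    have hx0 : x ≠ 0 := (Finset.mem_filter.mp hx).2
    rw [h x hx0, unifD]; simp [hx0]
  rw [h0, h1, Finset.sum_const, cardNZ, zero_add, nsmul_eq_mul]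
  push_cast
  have : ((n : ℝ) + 2) ≠ 0 := by positivity
  field_simp

lemma delta_isProb {n : ℕ} : (∀ x, 0 ≤ deltaD n x) ∧ ∑ x, deltaD n x = 1 := by
  constructor
  · intro x; unfold deltaD; split <;> norm_num
  · have := delta_weighted (n := n) (fun _ => 1)
    simpa using this

lemma unif_isProb {n : ℕ} : (∀ x, 0 ≤ unifD n x) ∧ ∑ x, unifD n x = 1 := by
  constructor
  · intro x; unfold unifD; split
    · exact le_refl 0
    · positivity
  · have := unif_weighted (n := n) (fun _ => 1) 1 (fun _ _ => rfl)
    simpa using this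

lemma condMI1_delta {a b c : ℕ} (Q2 : Fin (b + 3) → ℝ)
    (W : Fin (a + 3) → Fin (b + 3) → Fin (c + 2) → ℝ)
    (hunif : ∀ x2 y, W 0 x2 y = 1 / ((c : ℝ) + 2)) :
    condMI1 (fun x1 x2 => deltaD a x1 * Q2 x2) W = 0 := by
  unfold condMI1
  apply Finset.sum_eq_zero; intro x2 _
  have hmarg : marg2 (fun x1 x2 => deltaD a x1 * Q2 x2) x2 = Q2 x2 := by
    unfold marg2
    exact delta_weighted (fun x1 => Q2 x2)
  have havg : ∀ y, ∑ x1', deltaD a x1' * Q2 x2 * W x1' x2 y = Q2 x2 * W 0 x2 y := by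
    intro y
    have := delta_weighted (fun x1' => Q2 x2 * W x1' x2 y)
    rw [← this]
    refine Finset.sum_congr rfl fun x1' _ => by ring
  apply Finset.sum_eq_zero; intro x1 _
  apply Finset.sum_eq_zero; intro y _
  by_cases hx1 : x1 = 0
  · subst hx1
    by_cases hq : Q2 x2 = 0
    · simp [hq]
    · rw [hmarg, havg y, mul_comm (Q2 x2) (W 0 x2 y), mul_div_assoc, div_self hq, mul_one,
        div_self (by rw [hunif]; positivity : W 0 x2 y ≠ 0), Real.log_one, mul_zero]
  · simp [deltaD, hx1]

lemma ent_perm' {n : ℕ} (p : Fin n → ℝ) (σ : Equiv.Perm (Fin n)) :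
    ent (fun y => p (σ y)) = ent p := by
  unfold ent
  congr 1
  exact Equiv.sum_comp σ (fun y => p y * Real.log (p y))

lemma condMI1_unif {a b c : ℕ} (Q2 : Fin (b + 3) → ℝ)
    (W : Fin (a + 3) → Fin (b + 3) → Fin (c + 2) → ℝ)
    (hWpos : ∀ x1 x2 y, 0 ≤ W x1 x2 y)
    (hrow : ∀ x1 x2, ∑ y, W x1 x2 y = 1)
    (hperm : ∀ x2, ∀ x1 : Fin (a + 3), x1 ≠ 0 →
      ∃ σ : Equiv.Perm (Fin (c + 2)), ∀ y, W x1 x2 y = W 1 x2 (σ y))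
    (hcol : ∀ x2, ∀ y y' : Fin (c + 2),
      ∑ x1 ∈ Finset.univ.filter (fun x1 => x1 ≠ (0 : Fin (a + 3))), W x1 x2 y =
      ∑ x1 ∈ Finset.univ.filter (fun x1 => x1 ≠ (0 : Fin (a + 3))), W x1 x2 y') :
    condMI1 (fun x1 x2 => unifD a x1 * Q2 x2) W
      = ∑ x2, Q2 x2 * (Real.log ((c : ℝ) + 2) - ent (fun y => W 1 x2 y)) := by
  unfold condMI1
  refine Finset.sum_congr rfl fun x2 _ => ?_
  set S : ℝ := (c : ℝ) + 2 with hS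
  have hSpos : (0 : ℝ) < S := by rw [hS]; positivity
  set E : ℝ := ent (fun y => W 1 x2 y) with hE
  by_cases hq : Q2 x2 = 0
  · rw [hq, zero_mul]
    apply Finset.sum_eq_zero; intro x1 _
    apply Finset.sum_eq_zero; intro y _
    simp [hq]
  · have hmarg : marg2 (fun x1 x2 => unifD a x1 * Q2 x2) x2 = Q2 x2 := by
      unfold marg2
      exact unif_weighted (fun _ => Q2 x2) (Q2 x2) (fun _ _ => rfl)
    have ha2 : ((a : ℝ) + 2) ≠ 0 := by positivity
    have havg : ∀ y, ∑ x1', unifD a x1' * Q2 x2 * W x1' x2 y = Q2 x2 * S⁻¹ := by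
      intro y
      rw [sum_split_zero (fun x1' => unifD a x1' * Q2 x2 * W x1' x2 y)]
      have h0 : unifD a 0 * Q2 x2 * W 0 x2 y = 0 := by simp [unifD]
      have h1 : ∑ x1' ∈ Finset.univ.filter (fun x1' => x1' ≠ (0 : Fin (a + 3))),
          unifD a x1' * Q2 x2 * W x1' x2 y
          = ((a : ℝ) + 2)⁻¹ * Q2 x2 *
            ∑ x1' ∈ Finset.univ.filter (fun x1' => x1' ≠ (0 : Fin (a + 3))), W x1' x2 y := by
        rw [Finset.mul_sum]
        refine Finset.sum_congr rfl fun x1' hx => ?_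
        have hx0 : x1' ≠ 0 := (Finset.mem_filter.mp hx).2
        unfold unifD; simp [hx0]
      rw [h0, h1, colsum W hrow hcol x2 y, zero_add, hS]
      field_simp
    have hlog1 : ∑ y, W 1 x2 y * Real.log (W 1 x2 y * S) = Real.log S - E := by
      have hterm : ∀ y, W 1 x2 y * Real.log (W 1 x2 y * S)
          = W 1 x2 y * Real.log (W 1 x2 y) + W 1 x2 y * Real.log S := by
        intro y
        by_cases h0 : W 1 x2 y = 0
        · simp [h0]
        · rw [Real.log_mul h0 (ne_of_gt hSpos)]; ring
      rw [Finset.sum_congr rfl fun y _ => hterm y, Finset.sum_add_distrib,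
        ← Finset.sum_mul, hrow, hE, ent]
      ring
    have hWlog : ∀ x1 : Fin (a + 3), x1 ≠ 0 →
        ∑ y, W x1 x2 y * Real.log (W x1 x2 y * S) = Real.log S - E := by
      intro x1 hx1
      obtain ⟨σ, hσ⟩ := hperm x2 x1 hx1
      calc ∑ y, W x1 x2 y * Real.log (W x1 x2 y * S)
          = ∑ y, W 1 x2 (σ y) * Real.log (W 1 x2 (σ y) * S) :=
            Finset.sum_congr rfl fun y _ => by rw [hσ]
        _ = ∑ y, W 1 x2 y * Real.log (W 1 x2 y * S) :=
            Equiv.sum_comp σ (fun y => W 1 x2 y * Real.log (W 1 x2 y * S))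
        _ = Real.log S - E := hlog1
    calc ∑ x1, ∑ y, unifD a x1 * Q2 x2 * W x1 x2 y *
          Real.log (W x1 x2 y / ((∑ x1', unifD a x1' * Q2 x2 * W x1' x2 y) /
            marg2 (fun x1 x2 => unifD a x1 * Q2 x2) x2))
        = ∑ x1, unifD a x1 * (Q2 x2 * ∑ y, W x1 x2 y * Real.log (W x1 x2 y * S)) := by
          refine Finset.sum_congr rfl fun x1 _ => ?_
          rw [Finset.mul_sum, Finset.mul_sum]
          refine Finset.sum_congr rfl fun y _ => ?_
          rw [hmarg, havg y, mul_comm (Q2 x2) S⁻¹, mul_div_assoc, div_self hq, mul_one,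
            div_eq_mul_inv (W x1 x2 y) S⁻¹, inv_inv]
          ring
      _ = Q2 x2 * (Real.log S - E) :=
          unif_weighted (fun x1 => Q2 x2 * ∑ y, W x1 x2 y * Real.log (W x1 x2 y * S))
            (Q2 x2 * (Real.log S - E)) (fun x1 hx1 => by
              show Q2 x2 * ∑ y, W x1 x2 y * Real.log (W x1 x2 y * S) = _
              rw [hWlog x1 hx1])

/-- Single-letter form of Theorem 1 (tightness of Shannon's inner bound):
(a) every joint-input rate pair lies in the region `D` of nonnegative pairs
dominated by the convex hull of `{(0,0), (C₁₁,C₂₁), (C₁₀,0), (0,C₂₀)}`;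
(b) every point of `D` is componentwise dominated by a point of the convex hull
of the rate pairs of product input distributions. -/
theorem stmt17 (r1 r2 s1 s2 : ℕ)
    (W1 : Fin (r1 + 3) → Fin (r2 + 3) → Fin (s1 + 2) → ℝ)
    (W2 : Fin (r1 + 3) → Fin (r2 + 3) → Fin (s2 + 2) → ℝ)
    (hW : GenPTT W1 W2) (hSym : SymProp W1 W2)
    (D : Set (ℝ × ℝ))
    (hD : D = {R : ℝ × ℝ | 0 ≤ R.1 ∧ 0 ≤ R.2 ∧
      ∃ p ∈ convexHull ℝ ({((0 : ℝ), (0 : ℝ)), (C1 W2 1, C2 W1 1),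
        (C1 W2 0, (0 : ℝ)), ((0 : ℝ), C2 W1 0)} : Set (ℝ × ℝ)),
        R.1 ≤ p.1 ∧ R.2 ≤ p.2}) :
    (∀ P : Fin (r1 + 3) → Fin (r2 + 3) → ℝ, IsJointProbDist P →
      (condMI1 P W2, condMI2 P W1) ∈ D) ∧
    (∀ R ∈ D, ∃ p ∈ convexHull ℝ {q : ℝ × ℝ |
        ∃ Q1 : Fin (r1 + 3) → ℝ, ∃ Q2 : Fin (r2 + 3) → ℝ,
          IsProbDist Q1 ∧ IsProbDist Q2 ∧
          q = (condMI1 (fun x1 x2 => Q1 x1 * Q2 x2) W2,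
               condMI2 (fun x1 x2 => Q1 x1 * Q2 x2) W1)},
      R.1 ≤ p.1 ∧ R.2 ≤ p.2) := by
  obtain ⟨hW1pos, hW2pos, hW1row, hW2row, hW2unif, hW2perm, hW2col, hW1unif, hW1perm, hW1col⟩ := hW
  obtain ⟨hSym1, hSym2⟩ := hSym
  set W1' : Fin (r2 + 3) → Fin (r1 + 3) → Fin (s1 + 2) → ℝ := fun x2 x1 y => W1 x1 x2 y with hW1'
  have hswap : ∀ P : Fin (r1 + 3) → Fin (r2 + 3) → ℝ,
      condMI2 P W1 = condMI1 (fun x2 x1 => P x1 x2) W1' := fun P => rfl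
  have hW1'unif : ∀ x1 y, W1' 0 x1 y = 1 / ((s1 : ℝ) + 2) := fun x1 y => hW1unif x1 y
  have hW1'perm : ∀ x1, ∀ x2 : Fin (r2 + 3), x2 ≠ 0 →
      ∃ σ : Equiv.Perm (Fin (s1 + 2)), ∀ y, W1' x2 x1 y = W1' 1 x1 (σ y) :=
    fun x1 x2 hx2 => hW1perm x1 x2 hx2
  have hW1'pos : ∀ x2 x1 y, 0 ≤ W1' x2 x1 y := fun x2 x1 y => hW1pos x1 x2 y
  have hW1'row : ∀ x2 x1, ∑ y, W1' x2 x1 y = 1 := fun x2 x1 => hW1row x1 x2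
  have hW1'col : ∀ x1, ∀ y y' : Fin (s1 + 2),
      ∑ x2 ∈ Finset.univ.filter (fun x2 => x2 ≠ (0 : Fin (r2 + 3))), W1' x2 x1 y =
      ∑ x2 ∈ Finset.univ.filter (fun x2 => x2 ≠ (0 : Fin (r2 + 3))), W1' x2 x1 y' :=
    fun x1 y y' => hW1col x1 y y'
  constructor
  · -- part (a)
    intro P hP
    obtain ⟨hPnn, hPsum⟩ := hP
    set A := marg2 P 0 with hA
    set Bb := marg1 P 0 with hB
    set Cc := P 0 0 with hC
    set lam : ℝ := 1 - A - Bb + Cc with hlam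
    have hsplitA := sum_split_zero (fun x1 => P x1 0)
    have hsplitB := sum_split_zero (fun x2 => P 0 x2)
    have hP0fil1 : ∑ x1 ∈ Finset.univ.filter (fun x1 => x1 ≠ (0 : Fin (r1 + 3))), P x1 0
        = A - Cc := by rw [hA, marg2] at *; linarith [hsplitA]
    have hP0fil2 : ∑ x2 ∈ Finset.univ.filter (fun x2 => x2 ≠ (0 : Fin (r2 + 3))), P 0 x2
        = Bb - Cc := by rw [hB, marg1] at *; linarith [hsplitB]
    have hACnn : 0 ≤ A - Cc := by
      rw [← hP0fil1]; exact Finset.sum_nonneg fun x1 _ => hPnn x1 0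
    have hBCnn : 0 ≤ Bb - Cc := by
      rw [← hP0fil2]; exact Finset.sum_nonneg fun x2 _ => hPnn 0 x2
    have hCcnn : 0 ≤ Cc := hPnn 0 0
    have hmargsum1 : ∑ x1, marg1 P x1 = 1 := by
      rw [← hPsum]; exact Finset.sum_congr rfl fun x1 _ => rfl
    have hmargsum2 : ∑ x2, marg2 P x2 = 1 := by
      rw [← hPsum, Finset.sum_comm]; exact Finset.sum_congr rfl fun x2 _ => rfl
    have hmfil1 : ∑ x1 ∈ Finset.univ.filter (fun x1 => x1 ≠ (0 : Fin (r1 + 3))), marg1 P x1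
        = 1 - Bb := by
      have := sum_split_zero (fun x1 => marg1 P x1)
      rw [hmargsum1] at this; rw [hB]; linarith
    have hmfil2 : ∑ x2 ∈ Finset.univ.filter (fun x2 => x2 ≠ (0 : Fin (r2 + 3))), marg2 P x2
        = 1 - A := by
      have := sum_split_zero (fun x2 => marg2 P x2)
      rw [hmargsum2] at this; rw [hA]; linarith
    have hlamnn : 0 ≤ lam := by
      have hfil : ∑ x1 ∈ Finset.univ.filter (fun x1 => x1 ≠ (0 : Fin (r1 + 3))),
          (marg1 P x1 - P x1 0)
          = 1 - Bb - (A - Cc) := by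
        rw [Finset.sum_sub_distrib, hmfil1, hP0fil1]
      have hnn : 0 ≤ ∑ x1 ∈ Finset.univ.filter (fun x1 => x1 ≠ (0 : Fin (r1 + 3))),
          (marg1 P x1 - P x1 0) := by
        apply Finset.sum_nonneg
        intro x1 _
        have := sum_split_zero (fun x2 => P x1 x2)
        have h2 : 0 ≤ ∑ x2 ∈ Finset.univ.filter (fun x2 => x2 ≠ (0 : Fin (r2 + 3))), P x1 x2 :=
          Finset.sum_nonneg fun x2 _ => hPnn x1 x2
        have : marg1 P x1 = P x1 0 + ∑ x2 ∈ Finset.univ.filter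
            (fun x2 => x2 ≠ (0 : Fin (r2 + 3))), P x1 x2 := this
        linarith
      rw [hlam]; linarith [hfil, hnn]
    -- bound on condMI1
    have hle1 := condMI1_le P W2 hPnn hW2pos hW2row hW2unif hW2perm
    have hsum1 : ∑ x2, (marg2 P x2 - P 0 x2) *
        (Real.log ((s2 : ℝ) + 2) - ent (fun y => W2 1 x2 y))
        = (A - Cc) * C1 W2 0 + lam * C1 W2 1 := by
      rw [sum_split_zero (fun x2 => (marg2 P x2 - P 0 x2) *
        (Real.log ((s2 : ℝ) + 2) - ent (fun y => W2 1 x2 y)))]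
      have hc1 : ∑ x2 ∈ Finset.univ.filter (fun x2 => x2 ≠ (0 : Fin (r2 + 3))),
          (marg2 P x2 - P 0 x2) * (Real.log ((s2 : ℝ) + 2) - ent (fun y => W2 1 x2 y))
          = ∑ x2 ∈ Finset.univ.filter (fun x2 => x2 ≠ (0 : Fin (r2 + 3))),
            (marg2 P x2 - P 0 x2) * C1 W2 1 := by
        refine Finset.sum_congr rfl fun x2 hx2 => ?_
        rw [show Real.log ((s2 : ℝ) + 2) - ent (fun y => W2 1 x2 y) = C1 W2 x2 from rfl,
          hSym1 x2 (Finset.mem_filter.mp hx2).2]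
      rw [hc1, ← Finset.sum_mul, Finset.sum_sub_distrib, hmfil2, hP0fil2]
      show (marg2 P 0 - P 0 0) * C1 W2 0 + _ = _
      rw [← hA, ← hC, hlam]
      ring
    rw [hsum1] at hle1
    -- bound on condMI2
    have hle2' := condMI1_le (fun x2 x1 => P x1 x2) W1' (fun x2 x1 => hPnn x1 x2)
      hW1'pos hW1'row hW1'unif hW1'perm
    rw [← hswap P] at hle2'
    have hsum2 : ∑ x1, (marg2 (fun x2 x1 => P x1 x2) x1 - (fun x2 x1 => P x1 x2) 0 x1) *
        (Real.log ((s1 : ℝ) + 2) - ent (fun y => W1' 1 x1 y))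
        = (Bb - Cc) * C2 W1 0 + lam * C2 W1 1 := by
      have hmm : ∀ x1, marg2 (fun x2 x1 => P x1 x2) x1 = marg1 P x1 := fun x1 => rfl
      rw [sum_split_zero (fun x1 => (marg2 (fun x2 x1 => P x1 x2) x1 -
        (fun x2 x1 => P x1 x2) 0 x1) *
        (Real.log ((s1 : ℝ) + 2) - ent (fun y => W1' 1 x1 y)))]
      have hc1 : ∑ x1 ∈ Finset.univ.filter (fun x1 => x1 ≠ (0 : Fin (r1 + 3))),
          (marg2 (fun x2 x1 => P x1 x2) x1 - (fun x2 x1 => P x1 x2) 0 x1) *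
          (Real.log ((s1 : ℝ) + 2) - ent (fun y => W1' 1 x1 y))
          = ∑ x1 ∈ Finset.univ.filter (fun x1 => x1 ≠ (0 : Fin (r1 + 3))),
            (marg1 P x1 - P x1 0) * C2 W1 1 := by
        refine Finset.sum_congr rfl fun x1 hx1 => ?_
        rw [hmm x1]
        rw [show Real.log ((s1 : ℝ) + 2) - ent (fun y => W1' 1 x1 y) = C2 W1 x1 from rfl,
          hSym2 x1 (Finset.mem_filter.mp hx1).2]
      rw [hc1, ← Finset.sum_mul, Finset.sum_sub_distrib, hmfil1, hP0fil1]
      show (marg2 (fun x2 x1 => P x1 x2) 0 - P 0 0) * _ + _ = _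
      rw [hmm 0, ← hB, ← hC, hlam]
      show (Bb - Cc) * C2 W1 0 + _ = _
      ring
    rw [hsum2] at hle2'
    -- the dominating convex-hull point
    set p : ℝ × ℝ := (lam * C1 W2 1 + (A - Cc) * C1 W2 0,
      lam * C2 W1 1 + (Bb - Cc) * C2 W1 0) with hp
    set w : Fin 4 → ℝ := ![Cc, lam, A - Cc, Bb - Cc] with hw
    set z : Fin 4 → ℝ × ℝ := ![((0 : ℝ), (0 : ℝ)), (C1 W2 1, C2 W1 1),
      (C1 W2 0, (0 : ℝ)), ((0 : ℝ), C2 W1 0)] with hz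
    have hw1 : ∑ i, w i = 1 := by
      rw [hw]
      simp [Fin.sum_univ_four]
      rw [hlam]; ring
    have hmem : p ∈ convexHull ℝ ({((0 : ℝ), (0 : ℝ)), (C1 W2 1, C2 W1 1),
        (C1 W2 0, (0 : ℝ)), ((0 : ℝ), C2 W1 0)} : Set (ℝ × ℝ)) := by
      have hzmem : ∀ i ∈ (Finset.univ : Finset (Fin 4)), z i ∈ ({((0 : ℝ), (0 : ℝ)),
          (C1 W2 1, C2 W1 1), (C1 W2 0, (0 : ℝ)), ((0 : ℝ), C2 W1 0)} : Set (ℝ × ℝ)) := by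
        intro i _
        fin_cases i <;> simp [hz, Set.mem_insert_iff]
      have hw0 : ∀ i ∈ (Finset.univ : Finset (Fin 4)), 0 ≤ w i := by
        intro i _
        fin_cases i
        · simpa [hw] using hCcnn
        · simpa [hw] using hlamnn
        · simpa [hw] using hACnn
        · simpa [hw] using hBCnn
      have hcm := Finset.centerMass_mem_convexHull (Finset.univ : Finset (Fin 4))
        hw0 (by rw [hw1]; norm_num) hzmem
      have hcmeq : (Finset.univ : Finset (Fin 4)).centerMass w z = p := by
        rw [Finset.centerMass_eq_of_sum_1 _ _ hw1]
        rw [hp, hw, hz]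
        simp [Fin.sum_univ_four, Prod.ext_iff]
      rw [← hcmeq]
      exact hcm
    rw [hD]
    refine ⟨condMI1_nonneg P W2 hPnn hW2pos hW2row, ?_, p, hmem, ?_, ?_⟩
    · rw [hswap P]
      exact condMI1_nonneg _ W1' (fun x2 x1 => hPnn x1 x2) hW1'pos hW1'row
    · rw [hp]; exact le_trans hle1 (by simp; ring_nf; exact le_refl _)
    · rw [hp]; exact le_trans hle2' (by simp; ring_nf; exact le_refl _)
  · -- part (b)
    intro R hR
    rw [hD] at hR
    obtain ⟨_, _, p, hphull, hRp⟩ := hR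
    refine ⟨p, ?_, hRp⟩
    apply convexHull_mono ?_ hphull
    -- each of the four corners is achieved by a product distribution
    have F00a : condMI1 (fun x1 x2 => deltaD r1 x1 * deltaD r2 x2) W2 = 0 :=
      condMI1_delta (deltaD r2) W2 hW2unif
    have F00b : condMI2 (fun x1 x2 => deltaD r1 x1 * deltaD r2 x2) W1 = 0 := by
      rw [hswap, show (fun x2 x1 => deltaD r1 x1 * deltaD r2 x2)
        = (fun x2 x1 => deltaD r2 x2 * deltaD r1 x1) by funext x2 x1; ring]
      exact condMI1_delta (deltaD r1) W1' hW1'unif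
    have F10a : condMI1 (fun x1 x2 => unifD r1 x1 * deltaD r2 x2) W2 = C1 W2 0 := by
      rw [condMI1_unif (deltaD r2) W2 hW2pos hW2row hW2perm hW2col]
      exact delta_weighted (fun x2 => Real.log ((s2 : ℝ) + 2) - ent (fun y => W2 1 x2 y))
    have F10b : condMI2 (fun x1 x2 => unifD r1 x1 * deltaD r2 x2) W1 = 0 := by
      rw [hswap, show (fun x2 x1 => unifD r1 x1 * deltaD r2 x2)
        = (fun x2 x1 => deltaD r2 x2 * unifD r1 x1) by funext x2 x1; ring]
      exact condMI1_delta (unifD r1) W1' hW1'unif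
    have F01a : condMI1 (fun x1 x2 => deltaD r1 x1 * unifD r2 x2) W2 = 0 :=
      condMI1_delta (unifD r2) W2 hW2unif
    have F01b : condMI2 (fun x1 x2 => deltaD r1 x1 * unifD r2 x2) W1 = C2 W1 0 := by
      rw [hswap, show (fun x2 x1 => deltaD r1 x1 * unifD r2 x2)
        = (fun x2 x1 => unifD r2 x2 * deltaD r1 x1) by funext x2 x1; ring]
      rw [condMI1_unif (deltaD r1) W1' hW1'pos hW1'row hW1'perm hW1'col]
      exact delta_weighted (fun x1 => Real.log ((s1 : ℝ) + 2) - ent (fun y => W1' 1 x1 y))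
    have F11a : condMI1 (fun x1 x2 => unifD r1 x1 * unifD r2 x2) W2 = C1 W2 1 := by
      rw [condMI1_unif (unifD r2) W2 hW2pos hW2row hW2perm hW2col]
      exact unif_weighted (fun x2 => Real.log ((s2 : ℝ) + 2) - ent (fun y => W2 1 x2 y))
        (C1 W2 1) (fun x2 hx2 => hSym1 x2 hx2)
    have F11b : condMI2 (fun x1 x2 => unifD r1 x1 * unifD r2 x2) W1 = C2 W1 1 := by
      rw [hswap, show (fun x2 x1 => unifD r1 x1 * unifD r2 x2)
        = (fun x2 x1 => unifD r2 x2 * unifD r1 x1) by funext x2 x1; ring]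
      rw [condMI1_unif (unifD r1) W1' hW1'pos hW1'row hW1'perm hW1'col]
      exact unif_weighted (fun x1 => Real.log ((s1 : ℝ) + 2) - ent (fun y => W1' 1 x1 y))
        (C2 W1 1) (fun x1 hx1 => hSym2 x1 hx1)
    intro q hq
    rcases hq with h | h | h | h
    · exact ⟨deltaD r1, deltaD r2, delta_isProb, delta_isProb, by
        rw [h, F00a, F00b]⟩
    · exact ⟨unifD r1, unifD r2, unif_isProb, unif_isProb, by
        rw [h, F11a, F11b]⟩
    · exact ⟨unifD r1, deltaD r2, unif_isProb, delta_isProb, by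
        rw [h, F10a, F10b]⟩
    · exact ⟨deltaD r1, unifD r2, delta_isProb, unif_isProb, by
        rw [h, F01a, F01b]⟩
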